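/- Let 𝒢 be a periodic evolving graph with period Γ, emulated graph G(𝒢), and extended path set P* = static(𝒫⁰), and let M be a demand matrix. If ℱ : 𝒫* → ℝ≥0 is a legal temporal flow in 𝒢 achieving throughput θ for M, then the flow F defined by F(static(δ)) = ((1−Δu)/Γ)·ℱ(δ) for all δ ∈ 𝒫⁰ is a legal flow on P* in the emulated graph G(𝒢) achieving throughput θ for M. -/

import Mathlib

open scoped ENNReal NNReal BigOperators

namespace RDCN

/-- A directed edge. -/
abbrev Edge (V : Type*) := V × V
/-- A temporal path (or a labelled-edge path): a list of edge/time(label) pairs. -/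
abbrev TPath (V : Type*) := List (Edge V × ℕ)
/-- An extended path in the emulated graph: a labelled-edge path together with its
unique identifier (a temporal path). -/
abbrev ExtPath (V : Type*) := TPath V × TPath V

variable {V : Type*}

/-- The vertex sequence of a list of directed edges. -/
def pathVerts (es : List (Edge V)) : List V :=
  match es with
  | [] => []
  | e :: _ => e.1 :: es.map Prod.snd

/-- A nonempty list of directed edges forming a directed path visiting pairwise
distinct vertices. -/
def IsSimpleEdgePath (es : List (Edge V)) : Prop :=
  es ≠ [] ∧ es.Chain' (fun e e' => e.2 = e'.1) ∧ (pathVerts es).Nodup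

/-- `es` is a path from `s` to `d`. -/
def EndpointsOf (es : List (Edge V)) (s d : V) : Prop :=
  es.head?.map Prod.fst = some s ∧ es.getLast?.map Prod.snd = some d

/-- A periodic evolving graph with period `Γ`, timeslot duration `Δ` and
reconfiguration fraction `Δu`. -/
structure PEG (V : Type*) where
  Γ : ℕ
  Γ_pos : 1 ≤ Γ
  E : ℕ → Set (V × V)
  E_periodic : ∀ t, E (t + Γ) = E t
  c : ℕ → V × V → ℝ≥0
  c_periodic : ∀ t e, c (t + Γ) e = c t e
  c_zero : ∀ t e, e ∉ E t → c t e = 0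
  Δ : ℝ≥0
  Δ_pos : 0 < Δ
  Δu : ℝ≥0
  Δu_lt_one : Δu < 1

/-- A legal temporal path in the periodic evolving graph `G`. -/
def IsTemporalPath (G : PEG V) (δ : TPath V) : Prop :=
  δ ≠ [] ∧ (∀ x ∈ δ, x.1 ∈ G.E x.2) ∧
    δ.Chain' (fun x y => x.2 < y.2 ∧ y.2 ≤ x.2 + G.Γ) ∧
    IsSimpleEdgePath (δ.map Prod.fst)

/-- The foundation set `𝒫⁰`: legal temporal paths starting in the first period. -/
def Foundation (G : PEG V) : Set (TPath V) :=
  {δ | IsTemporalPath G δ ∧ ∀ t₀ : ℕ, δ.head?.map Prod.snd = some t₀ → t₀ < G.Γ}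

/-- The temporal path `δ` goes from `s` to `d`. -/
def TEndpoints (δ : TPath V) (s d : V) : Prop :=
  EndpointsOf (δ.map Prod.fst) s d

/-- `𝒫⁰_{s,d}`. -/
def FoundationSD (G : PEG V) (s d : V) : Set (TPath V) :=
  {δ | δ ∈ Foundation G ∧ TEndpoints δ s d}

/-- Shift all times of a temporal path by `k·Γ`. -/
def shiftPath (Γ k : ℕ) (δ : TPath V) : TPath V :=
  δ.map fun x => (x.1, x.2 + k * Γ)

/-- `𝒫*`: all periodic shifts of foundation paths. -/
def PStar (G : PEG V) : Set (TPath V) :=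
  {δ' | ∃ δ ∈ Foundation G, ∃ k : ℕ, δ' = shiftPath G.Γ k δ}

/-- `𝒫*_{s,d}`. -/
def PStarSD (G : PEG V) (s d : V) : Set (TPath V) :=
  {δ | δ ∈ PStar G ∧ TEndpoints δ s d}

/-- A legal temporal flow: nonnegative (enforced by `ℝ≥0`), invariant under
shifting a path's times by `Γ`, and obeying the capacity constraints at all times. -/
structure IsLegalTemporalFlow (G : PEG V) (F : TPath V → ℝ≥0) : Prop where
  periodic : ∀ δ ∈ PStar G, F (shiftPath G.Γ 1 δ) = F δ
  capacity : ∀ (e : Edge V) (t : ℕ),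
    ∑' δ : {δ : TPath V // δ ∈ PStar G ∧ (e, t) ∈ δ}, ((F (δ : TPath V) : ℝ≥0) : ℝ≥0∞)
      ≤ (G.c t e : ℝ≥0∞)

/-- The factor `(1-Δu)/Γ`. -/
noncomputable def capFactor (G : PEG V) : ℝ≥0∞ :=
  ((1 - G.Δu : ℝ≥0) : ℝ≥0∞) / (G.Γ : ℝ≥0∞)

/-- The temporal flow `F` achieves throughput `θ` for the demand matrix `m`:
`((1-Δu)/Γ)·Σ_{δ ∈ 𝒫⁰_{s,d}} F(δ) ≥ θ·m_{s,d}` for all `s, d`. -/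
def AchievesThroughputT (G : PEG V) (F : TPath V → ℝ≥0) (m : V → V → ℝ≥0)
    (θ : ℝ≥0∞) : Prop :=
  ∀ s d : V, θ * (m s d : ℝ≥0∞) ≤
    capFactor G * ∑' δ : FoundationSD G s d, ((F (δ : TPath V) : ℝ≥0) : ℝ≥0∞)

/-- Capacity `ĉ(e,ℓ) = ((1-Δu)/Γ)·c_ℓ(e)` of a labelled edge of the emulated graph. -/
noncomputable def chat (G : PEG V) (e : Edge V) (ℓ : ℕ) : ℝ≥0∞ :=
  capFactor G * (G.c ℓ e : ℝ≥0∞)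

/-- The map `static` sending a temporal path `δ = ⟨(eᵢ,tᵢ)⟩` to the extended path
`(⟨(eᵢ, tᵢ mod Γ)⟩, δ)` with `δ` as the unique identifier. -/
def staticOf (Γ : ℕ) (δ : TPath V) : ExtPath V :=
  (δ.map fun x => (x.1, x.2 % Γ), δ)

/-- `P* = static(𝒫⁰)`, the extended path set of the emulated graph. -/
def PStarStatic (G : PEG V) : Set (ExtPath V) :=
  staticOf G.Γ '' Foundation G

/-- The extended path `p` goes from `s` to `d`. -/
def SEndpoints (p : ExtPath V) (s d : V) : Prop :=
  EndpointsOf (p.1.map Prod.fst) s d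

/-- A legal flow on a set `P` of extended paths of the emulated graph: equal on paths
with identical labelled-edge sequences, and obeying the capacity constraints. -/
structure IsLegalStaticFlow (G : PEG V) (P : Set (ExtPath V)) (F : ExtPath V → ℝ≥0) :
    Prop where
  congr : ∀ p ∈ P, ∀ q ∈ P, p.1 = q.1 → F p = F q
  capacity : ∀ (e : Edge V) (ℓ : ℕ), ℓ < G.Γ →
    ∑' p : {p : ExtPath V // p ∈ P ∧ (e, ℓ) ∈ p.1}, ((F (p : ExtPath V) : ℝ≥0) : ℝ≥0∞)
      ≤ chat G e ℓ

/-- The flow `F` on the extended path set `P` achieves throughput `θ` for `m`: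
`Σ_{p ∈ P_{s,d}} F(p) ≥ θ·m_{s,d}` for all `s, d`. -/
def AchievesThroughputS (P : Set (ExtPath V)) (F : ExtPath V → ℝ≥0) (m : V → V → ℝ≥0)
    (θ : ℝ≥0∞) : Prop :=
  ∀ s d : V, θ * (m s d : ℝ≥0∞) ≤
    ∑' p : {p : ExtPath V // p ∈ P ∧ SEndpoints p s d}, ((F (p : ExtPath V) : ℝ≥0) : ℝ≥0∞)

/-- First time of a temporal path. -/
def tStart (δ : TPath V) : ℕ := (δ.head?.map Prod.snd).getD 0
/-- Last time of a temporal path. -/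
def tEnd (δ : TPath V) : ℕ := (δ.getLast?.map Prod.snd).getD 0

/-- The delay `L(δ) = (t_n − t₁ + 1)·Δ + (Γ−1)·Δ` of a temporal path. -/
noncomputable def delay (G : PEG V) (δ : TPath V) : ℝ≥0∞ :=
  ((tEnd δ - tStart δ + 1 : ℕ) : ℝ≥0∞) * (G.Δ : ℝ≥0∞) +
    ((G.Γ - 1 : ℕ) : ℝ≥0∞) * (G.Δ : ℝ≥0∞)

/-- `Σ_{δ ∈ 𝒫⁰_{s,d}} F(δ)`. -/
noncomputable def sdSum (G : PEG V) (F : TPath V → ℝ≥0) (s d : V) : ℝ≥0∞ :=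
  ∑' δ : FoundationSD G s d, ((F (δ : TPath V) : ℝ≥0) : ℝ≥0∞)

/-- `r_δ = F(δ)/Σ_{δ' ∈ 𝒫⁰_{s,d}} F(δ')` (with value `0` when the denominator is `0`,
which holds automatically since then `F(δ) = 0` for `δ ∈ 𝒫⁰_{s,d}`). -/
noncomputable def rfrac (G : PEG V) (F : TPath V → ℝ≥0) (s d : V) (δ : TPath V) : ℝ≥0∞ :=
  ((F δ : ℝ≥0) : ℝ≥0∞) / sdSum G F s d

/-- Total demand `M_tot = Σ_{s,d} m_{s,d}`. -/
noncomputable def Mtot [Fintype V] (m : V → V → ℝ≥0) : ℝ≥0∞ :=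
  ∑ s : V, ∑ d : V, (m s d : ℝ≥0∞)

/-- Average route delay `ARD(M,F) = Σ_{s,d} (m_{s,d}/M_tot)·Σ_{δ ∈ 𝒫⁰_{s,d}} r_δ·L(δ)`. -/
noncomputable def ARD [Fintype V] (G : PEG V) (F : TPath V → ℝ≥0) (m : V → V → ℝ≥0) :
    ℝ≥0∞ :=
  ∑ s : V, ∑ d : V, ((m s d : ℝ≥0∞) / Mtot m) *
    ∑' δ : FoundationSD G s d, rfrac G F s d (δ : TPath V) * delay G (δ : TPath V)

/-- Average route length
`ARL(M,F) = Σ_{s,d} Σ_{δ ∈ 𝒫⁰_{s,d}} (m_{s,d}/M_tot)·r_δ·len(δ)`. -/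
noncomputable def ARLt [Fintype V] (G : PEG V) (F : TPath V → ℝ≥0) (m : V → V → ℝ≥0) :
    ℝ≥0∞ :=
  ∑ s : V, ∑ d : V, ∑' δ : FoundationSD G s d,
    ((m s d : ℝ≥0∞) / Mtot m) * rfrac G F s d (δ : TPath V) * ((δ : TPath V).length : ℝ≥0∞)



section AuxLemmas

lemma shiftPath_shiftPath (Γ a b : ℕ) (δ : TPath V) :
    shiftPath Γ a (shiftPath Γ b δ) = shiftPath Γ (a + b) δ := by
  simp only [shiftPath, List.map_map]
  congr 1
  funext x
  simp only [Function.comp]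
  congr 1
  ring

lemma shiftPath_zero (Γ : ℕ) (δ : TPath V) : shiftPath Γ 0 δ = δ := by
  simp [shiftPath]

lemma shiftPath_mem_PStar {G : PEG V} {δ : TPath V} (h : δ ∈ PStar G) (k : ℕ) :
    shiftPath G.Γ k δ ∈ PStar G := by
  obtain ⟨δ₀, h₀, j, rfl⟩ := h
  rw [shiftPath_shiftPath]
  exact ⟨δ₀, h₀, k + j, rfl⟩

lemma mem_PStar_of_foundation {G : PEG V} {δ : TPath V} (h : δ ∈ Foundation G) :
    δ ∈ PStar G := ⟨δ, h, 0, (shiftPath_zero _ _).symm⟩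

lemma F_shift {G : PEG V} {ℱ : TPath V → ℝ≥0} (hleg : IsLegalTemporalFlow G ℱ)
    {δ : TPath V} (h : δ ∈ PStar G) (k : ℕ) :
    ℱ (shiftPath G.Γ k δ) = ℱ δ := by
  induction k with
  | zero => rw [shiftPath_zero]
  | succ n ih =>
    have h1 : shiftPath G.Γ (n + 1) δ = shiftPath G.Γ 1 (shiftPath G.Γ n δ) := by
      rw [shiftPath_shiftPath, Nat.add_comm]
    rw [h1, hleg.periodic _ (shiftPath_mem_PStar h n), ih]

lemma c_periodic_mul (G : PEG V) (t k : ℕ) (e : Edge V) :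
    G.c (t + k * G.Γ) e = G.c t e := by
  induction k with
  | zero => simp
  | succ n ih =>
    have h1 : t + (n + 1) * G.Γ = (t + n * G.Γ) + G.Γ := by ring
    rw [h1, G.c_periodic, ih]

lemma window_eq {Γ s x y : ℕ} (hx1 : s < x) (hx2 : x ≤ s + Γ) (hy1 : s < y)
    (hy2 : y ≤ s + Γ) (h : x % Γ = y % Γ) : x = y := by
  rcases le_total x y with hle | hle
  · have hdvd : Γ ∣ y - x := (Nat.modEq_iff_dvd' hle).mp h
    have := Nat.eq_zero_of_dvd_of_lt hdvd
    omega
  · have hdvd : Γ ∣ x - y := (Nat.modEq_iff_dvd' hle).mp h.symm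
    have := Nat.eq_zero_of_dvd_of_lt hdvd
    omega

lemma shift_head_eq {Γ j j' a b : ℕ} (h : a + j * Γ = b + j' * Γ) (ha : a < Γ)
    (hb : b < Γ) : j = j' ∧ a = b := by
  rcases lt_trichotomy j j' with hj | hj | hj
  · exfalso
    have h2 : (j + 1) * Γ ≤ j' * Γ := Nat.mul_le_mul_right _ (by omega)
    rw [add_mul, one_mul] at h2; omega
  · subst hj; omega
  · exfalso
    have h2 : (j' + 1) * Γ ≤ j * Γ := Nat.mul_le_mul_right _ (by omega)
    rw [add_mul, one_mul] at h2; omega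

lemma tail_unique {Γ : ℕ} :
    ∀ (l l' : TPath V) (a a' : Edge V × ℕ), a.2 = a'.2 →
      List.Chain (fun x y => x.2 < y.2 ∧ y.2 ≤ x.2 + Γ) a l →
      List.Chain (fun x y => x.2 < y.2 ∧ y.2 ≤ x.2 + Γ) a' l' →
      l.map (fun x => (x.1, x.2 % Γ)) = l'.map (fun x => (x.1, x.2 % Γ)) →
      l = l' := by
  intro l
  induction l with
  | nil =>
    intro l' a a' _ _ _ hmap
    exact (List.map_eq_nil_iff.mp hmap.symm).symm
  | cons b l ih =>
    intro l' a a' haa hc hc' hmap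
    cases l' with
    | nil => simp at hmap
    | cons b' l'' =>
      simp only [List.map_cons, List.cons.injEq, Prod.mk.injEq] at hmap
      obtain ⟨⟨hb1, hb2⟩, htl⟩ := hmap
      simp only [List.Chain, List.chain_cons] at hc hc'
      have hb : b.2 = b'.2 :=
        window_eq hc.1.1 hc.1.2 (haa ▸ hc'.1.1) (haa ▸ hc'.1.2) hb2
      have := ih l'' b b' hb hc.2 hc'.2 htl
      rw [this, Prod.ext hb1 hb]

/-- The head time of a foundation path is `< Γ`, and it is nonempty. -/
lemma foundation_head {G : PEG V} {δ : TPath V} (h : δ ∈ Foundation G) :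
    ∃ a l, δ = a :: l ∧ a.2 < G.Γ ∧
      List.Chain (fun x y : Edge V × ℕ => x.2 < y.2 ∧ y.2 ≤ x.2 + G.Γ) a l := by
  obtain ⟨⟨hne, _, hchain, _⟩, hstart⟩ := h
  cases δ with
  | nil => exact absurd rfl hne
  | cons a l =>
    exact ⟨a, l, rfl, hstart a.2 rfl, hchain⟩

/-- Two foundation paths with the same static image are equal. -/
lemma foundation_static_inj {G : PEG V} {δ δ' : TPath V} (h : δ ∈ Foundation G)
    (h' : δ' ∈ Foundation G)
    (heq : δ.map (fun x => (x.1, x.2 % G.Γ)) = δ'.map (fun x => (x.1, x.2 % G.Γ))) :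
    δ = δ' := by
  obtain ⟨a, l, rfl, ha, hc⟩ := foundation_head h
  obtain ⟨a', l', rfl, ha', hc'⟩ := foundation_head h'
  simp only [List.map_cons, List.cons.injEq, Prod.mk.injEq] at heq
  obtain ⟨⟨h1, h2⟩, htl⟩ := heq
  have h2' : a.2 = a'.2 := by
    rwa [Nat.mod_eq_of_lt ha, Nat.mod_eq_of_lt ha'] at h2
  have := tail_unique l l' a a' h2' hc hc' htl
  rw [this, Prod.ext h1 h2']

/-- Two foundation paths with equal shifts are equal. -/
lemma foundation_shift_inj {G : PEG V} {δ δ' : TPath V} (h : δ ∈ Foundation G)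
    (h' : δ' ∈ Foundation G) {j j' : ℕ}
    (heq : shiftPath G.Γ j δ = shiftPath G.Γ j' δ') : δ = δ' := by
  obtain ⟨a, l, rfl, ha, -⟩ := foundation_head h
  obtain ⟨a', l', rfl, ha', -⟩ := foundation_head h'
  simp only [shiftPath, List.map_cons, List.cons.injEq, Prod.mk.injEq] at heq
  obtain ⟨⟨h1, h2⟩, htl⟩ := heq
  obtain ⟨hjj, haa⟩ := shift_head_eq h2 ha ha'
  subst hjj
  have hinj : Function.Injective (fun x : Edge V × ℕ => (x.1, x.2 + j * G.Γ)) := by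
    intro x y hxy
    simp only [Prod.mk.injEq] at hxy
    exact Prod.ext hxy.1 (by omega)
  have := List.map_injective_iff.mpr hinj htl
  rw [this, Prod.ext h1 haa]

lemma chain_time_le {Γ : ℕ} :
    ∀ (l : TPath V) (a : Edge V × ℕ),
      List.Chain (fun x y => x.2 < y.2 ∧ y.2 ≤ x.2 + Γ) a l →
      ∀ x ∈ l, x.2 ≤ a.2 + l.length * Γ := by
  intro l
  induction l with
  | nil => simp
  | cons b l ih =>
    intro a hc x hx
    simp only [List.Chain, List.chain_cons] at hc
    rw [List.length_cons, Nat.succ_mul]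
    rcases List.mem_cons.mp hx with rfl | hx
    · have := Nat.zero_le (l.length * Γ); omega
    · have := ih b hc.2 x hx
      omega

/-- Any time appearing in a foundation path is less than `card V · Γ`. -/
lemma foundation_time_lt [Fintype V] {G : PEG V} {δ : TPath V}
    (h : δ ∈ Foundation G) {x : Edge V × ℕ} (hx : x ∈ δ) :
    x.2 < Fintype.card V * G.Γ := by
  obtain ⟨a, l, rfl, ha, hc⟩ := foundation_head h
  obtain ⟨⟨-, -, -, -, -, hnd⟩, -⟩ := h
  have hlen' : (pathVerts ((a :: l).map Prod.fst)).length = l.length + 2 := by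
    simp [pathVerts]
  have hlen : l.length + 2 ≤ Fintype.card V := hlen' ▸ hnd.length_le_card
  have hbound : x.2 < (l.length + 1) * G.Γ := by
    rcases List.mem_cons.mp hx with rfl | hx
    · have h1 : 1 * G.Γ ≤ (l.length + 1) * G.Γ :=
        Nat.mul_le_mul_right _ (by omega)
      rw [one_mul] at h1; omega
    · have := chain_time_le l a hc x hx
      rw [Nat.succ_mul]; omega
  have h2 : (l.length + 1) * G.Γ ≤ Fintype.card V * G.Γ :=
    Nat.mul_le_mul_right _ (by omega)
  omega

lemma static_fst_map (Γ : ℕ) (δ : TPath V) :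
    (staticOf Γ δ).1.map Prod.fst = δ.map Prod.fst := by
  simp only [staticOf, List.map_map]
  rfl

lemma mem_PStarStatic {G : PEG V} {p : ExtPath V} (hp : p ∈ PStarStatic G) :
    p = staticOf G.Γ p.2 ∧ p.2 ∈ Foundation G := by
  obtain ⟨δ, hδ, rfl⟩ := hp
  exact ⟨rfl, hδ⟩

end AuxLemmas

/-- Lemma: evolving-to-static conversion.
If `ℱ` is a legal temporal flow in `G` achieving throughput `θ` for `m`, then the flow
`F` defined by `F(static(δ)) = ((1−Δu)/Γ)·ℱ(δ)` for all `δ ∈ 𝒫⁰` is a legal flow on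
`P* = static(𝒫⁰)` in the emulated graph achieving throughput `θ` for `m`. -/
theorem statement2 {V : Type*} [Fintype V] [DecidableEq V] (G : PEG V)
    (m : V → V → ℝ≥0) (θ : ℝ≥0∞) (ℱ : TPath V → ℝ≥0)
    (hleg : IsLegalTemporalFlow G ℱ)
    (hth : AchievesThroughputT G ℱ m θ)
    (F : ExtPath V → ℝ≥0)
    (hF : ∀ δ ∈ Foundation G,
      F (staticOf G.Γ δ) = ((1 - G.Δu) / (G.Γ : ℝ≥0)) * ℱ δ) :
    IsLegalStaticFlow G (PStarStatic G) F ∧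
      AchievesThroughputS (PStarStatic G) F m θ := by
  have hΓpos : 0 < G.Γ := G.Γ_pos
  have hΓ0 : (G.Γ : ℝ≥0) ≠ 0 := Nat.cast_ne_zero.mpr (by omega)
  have hcap : ((((1 - G.Δu) / (G.Γ : ℝ≥0)) : ℝ≥0) : ℝ≥0∞) = capFactor G := by
    rw [ENNReal.coe_div hΓ0, capFactor]
    norm_cast
  constructor
  · constructor
    · -- congr
      intro p hp q hq hpq
      obtain ⟨hpe, hpf⟩ := mem_PStarStatic hp
      obtain ⟨hqe, hqf⟩ := mem_PStarStatic hq
      have h2 : p.2 = q.2 := by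
        refine foundation_static_inj hpf hqf ?_
        have := hpq
        rw [hpe, hqe] at this
        exact this
      rw [hpe, hqe, h2]
    · -- capacity
      intro e ℓ hℓ
      set N := Fintype.card V with hNdef
      have step1 : ∀ p : {p : ExtPath V // p ∈ PStarStatic G ∧ (e, ℓ) ∈ p.1},
          ((F (p : ExtPath V) : ℝ≥0) : ℝ≥0∞)
            = capFactor G * ((ℱ ((p : ExtPath V).2) : ℝ≥0) : ℝ≥0∞) := by
        intro p
        obtain ⟨hpe, hpf⟩ := mem_PStarStatic p.2.1
        rw [hpe, hF _ hpf, ENNReal.coe_mul, hcap]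
        rfl
      have hex : ∀ p : {p : ExtPath V // p ∈ PStarStatic G ∧ (e, ℓ) ∈ p.1},
          ∃ x, x ∈ (p : ExtPath V).2 ∧ x.1 = e ∧ x.2 % G.Γ = ℓ := by
        rintro ⟨p, hp, hmem⟩
        obtain ⟨hpe, hpf⟩ := mem_PStarStatic hp
        rw [hpe] at hmem
        have hmem' : (e, ℓ) ∈ p.2.map (fun x => (x.1, x.2 % G.Γ)) := hmem
        obtain ⟨x, hx, hfx⟩ := List.mem_map.mp hmem'
        exact ⟨x, hx, congrArg Prod.fst hfx, congrArg Prod.snd hfx⟩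
      have hbound : (∑' p : {p : ExtPath V // p ∈ PStarStatic G ∧ (e, ℓ) ∈ p.1},
          ((ℱ ((p : ExtPath V).2) : ℝ≥0) : ℝ≥0∞)) ≤ (G.c ℓ e : ℝ≥0∞) := by
        have imem : ∀ p : {p : ExtPath V // p ∈ PStarStatic G ∧ (e, ℓ) ∈ p.1},
            shiftPath G.Γ (N - ((hex p).choose.2 / G.Γ)) (p : ExtPath V).2 ∈ PStar G ∧
              (e, ℓ + N * G.Γ) ∈
                shiftPath G.Γ (N - ((hex p).choose.2 / G.Γ)) (p : ExtPath V).2 := by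
          intro p
          obtain ⟨hx, hxe, hxm⟩ := (hex p).choose_spec
          obtain ⟨hpe, hpf⟩ := mem_PStarStatic p.2.1
          refine ⟨⟨_, hpf, _, rfl⟩, ?_⟩
          set x := (hex p).choose with hxdef
          set k := x.2 / G.Γ with hkdef
          have hxlt : x.2 < N * G.Γ := foundation_time_lt hpf hx
          have hklt : k < N := (Nat.div_lt_iff_lt_mul hΓpos).mpr hxlt
          have hdm : k * G.Γ + x.2 % G.Γ = x.2 := by
            rw [mul_comm]; exact Nat.div_add_mod x.2 G.Γ
          rw [hxm] at hdm
          have hsplit : N * G.Γ = k * G.Γ + (N - k) * G.Γ := by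
            rw [← Nat.add_mul]; congr 1; omega
          have heq : (e, ℓ + N * G.Γ) = (x.1, x.2 + (N - k) * G.Γ) := by
            rw [Prod.mk.injEq]
            exact ⟨hxe.symm, by omega⟩
          rw [heq]
          exact List.mem_map_of_mem hx
        let i : {p : ExtPath V // p ∈ PStarStatic G ∧ (e, ℓ) ∈ p.1} →
            {δ : TPath V // δ ∈ PStar G ∧ (e, ℓ + N * G.Γ) ∈ δ} := fun p =>
          ⟨shiftPath G.Γ (N - ((hex p).choose.2 / G.Γ)) (p : ExtPath V).2, imem p⟩
        have hinj : Function.Injective i := by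
          intro p q hpq
          have hvals : shiftPath G.Γ (N - ((hex p).choose.2 / G.Γ)) (p : ExtPath V).2 =
              shiftPath G.Γ (N - ((hex q).choose.2 / G.Γ)) (q : ExtPath V).2 :=
            congrArg Subtype.val hpq
          obtain ⟨hpe, hpf⟩ := mem_PStarStatic p.2.1
          obtain ⟨hqe, hqf⟩ := mem_PStarStatic q.2.1
          have h2 := foundation_shift_inj hpf hqf hvals
          apply Subtype.ext
          rw [hpe, hqe, h2]
        calc (∑' p : {p : ExtPath V // p ∈ PStarStatic G ∧ (e, ℓ) ∈ p.1},
              ((ℱ ((p : ExtPath V).2) : ℝ≥0) : ℝ≥0∞))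
            = ∑' p : {p : ExtPath V // p ∈ PStarStatic G ∧ (e, ℓ) ∈ p.1},
                ((fun δ : {δ : TPath V // δ ∈ PStar G ∧ (e, ℓ + N * G.Γ) ∈ δ} =>
                  ((ℱ (δ : TPath V) : ℝ≥0) : ℝ≥0∞)) (i p)) := by
              refine tsum_congr fun p => ?_
              have := F_shift hleg
                (mem_PStar_of_foundation (mem_PStarStatic p.2.1).2)
                (N - ((hex p).choose.2 / G.Γ))
              simp only [i, this]
          _ ≤ ∑' δ : {δ : TPath V // δ ∈ PStar G ∧ (e, ℓ + N * G.Γ) ∈ δ},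
                ((ℱ (δ : TPath V) : ℝ≥0) : ℝ≥0∞) :=
              ENNReal.tsum_comp_le_tsum_of_injective hinj _
          _ ≤ (G.c (ℓ + N * G.Γ) e : ℝ≥0∞) := hleg.capacity e _
          _ = (G.c ℓ e : ℝ≥0∞) := by rw [c_periodic_mul]
      calc (∑' p : {p : ExtPath V // p ∈ PStarStatic G ∧ (e, ℓ) ∈ p.1},
            ((F (p : ExtPath V) : ℝ≥0) : ℝ≥0∞))
          = ∑' p : {p : ExtPath V // p ∈ PStarStatic G ∧ (e, ℓ) ∈ p.1},
              capFactor G * ((ℱ ((p : ExtPath V).2) : ℝ≥0) : ℝ≥0∞) := tsum_congr step1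
        _ = capFactor G * ∑' p : {p : ExtPath V // p ∈ PStarStatic G ∧ (e, ℓ) ∈ p.1},
              ((ℱ ((p : ExtPath V).2) : ℝ≥0) : ℝ≥0∞) := ENNReal.tsum_mul_left
        _ ≤ capFactor G * (G.c ℓ e : ℝ≥0∞) := by gcongr
        _ = chat G e ℓ := rfl
  · -- throughput
    intro s d
    have hEnd : ∀ δ : TPath V, SEndpoints (staticOf G.Γ δ) s d ↔ TEndpoints δ s d := by
      intro δ
      unfold SEndpoints TEndpoints
      rw [static_fst_map]
    refine le_trans (hth s d) (le_of_eq ?_)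
    let e : {δ : TPath V // δ ∈ FoundationSD G s d} ≃
        {p : ExtPath V // p ∈ PStarStatic G ∧ SEndpoints p s d} :=
      { toFun := fun δ => ⟨staticOf G.Γ δ.1, ⟨δ.1, δ.2.1, rfl⟩, (hEnd δ.1).mpr δ.2.2⟩
        invFun := fun p => ⟨(p : ExtPath V).2, by
          obtain ⟨hp, hsd⟩ := p.2
          obtain ⟨hpe, hpf⟩ := mem_PStarStatic hp
          refine ⟨hpf, (hEnd _).mp ?_⟩
          rw [← hpe]
          exact hsd⟩
        left_inv := fun δ => rfl
        right_inv := fun p => Subtype.ext ((mem_PStarStatic p.2.1).1).symm }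
    rw [← Equiv.tsum_eq e (fun p : {p : ExtPath V // p ∈ PStarStatic G ∧ SEndpoints p s d} =>
      ((F (p : ExtPath V) : ℝ≥0) : ℝ≥0∞))]
    rw [← ENNReal.tsum_mul_left]
    refine tsum_congr fun δ => ?_
    show capFactor G * ((ℱ (δ : TPath V) : ℝ≥0) : ℝ≥0∞)
        = ((F (staticOf G.Γ (δ : TPath V)) : ℝ≥0) : ℝ≥0∞)
    rw [hF _ δ.2.1, ENNReal.coe_mul, hcap]

end RDCN
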